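/- The complete bipartite graph K_{m,n} is antimagic for all m, n ≥ 1 with m + n ≥ 3. -/

import Mathlib

open Finset
set_option maxHeartbeats 2000000

open Finset

-- arithmetic helpers
lemma mul_add_lt_inj {N a b e f : ℕ} (he : e < N) (hf : f < N)
    (h : a * N + e = b * N + f) : a = b ∧ e = f := by
  rcases lt_trichotomy a b with hab | rfl | hab
  · obtain ⟨t, rfl⟩ := Nat.exists_eq_add_of_lt hab
    rw [add_mul, add_mul, one_mul] at h
    exfalso; linarith [Nat.zero_le (t * N)]
  · constructor; rfl; omega
  · obtain ⟨t, rfl⟩ := Nat.exists_eq_add_of_lt hab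
    rw [add_mul, add_mul, one_mul] at h
    exfalso; linarith [Nat.zero_le (t * N)]

lemma Lneq {N c i k d : ℕ} (h0 : 0 < d) (h1 : d < N) :
    i * N + c ≠ k * N + c + d := by
  intro h
  have := mul_add_lt_inj (a := i) (b := k) (e := 0) (f := d) (by omega) h1 (by linarith)
  omega

lemma lin_inj {a x y : ℕ} (h : a * x + x = a * y + y) : x = y := by
  rcases lt_trichotomy x y with hxy | rfl | hxy
  · have := Nat.mul_le_mul_left a hxy.le; exfalso; linarith
  · rfl
  · have := Nat.mul_le_mul_left a hxy.le; exfalso; linarith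

lemma sum_elim_inj {α β γ : Type*} {r : α → γ} {c : β → γ}
    (hr : Function.Injective r) (hc : Function.Injective c)
    (hrc : ∀ a b, r a ≠ c b) : Function.Injective (Sum.elim r c) := by
  intro x y hxy
  cases x <;> cases y <;> simp only [Sum.elim_inl, Sum.elim_inr] at hxy
  · rw [hr hxy]
  · exact absurd hxy (hrc _ _)
  · exact absurd hxy.symm (hrc _ _)
  · rw [hc hxy]

-- uniqueness of collision
lemma uniq_col {m n c B k j0 i j : ℕ} (hm : 1 ≤ m) (hmn : m ≤ n)
    (hk : k < m) (hj0 : j0 < n) (hi : i < m) (hj : j < n)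
    (h1 : k * (n * n) + c = B + m * j0) (h2 : i * (n * n) + c = B + m * j) :
    i = k ∧ j = j0 := by
  have hjlt : m * j < n * n := by nlinarith
  have hj0lt : m * j0 < n * n := by nlinarith
  rcases lt_trichotomy i k with hik | rfl | hik
  · obtain ⟨t, rfl⟩ := Nat.exists_eq_add_of_lt hik
    rw [add_mul, add_mul, one_mul] at h1
    exfalso; nlinarith [Nat.zero_le (t * (n * n))]
  · have : B + m * j0 = B + m * j := h1.symm.trans h2
    have := Nat.add_left_cancel this
    have := Nat.eq_of_mul_eq_mul_left (show 0 < m by omega) this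
    omega
  · obtain ⟨t, rfl⟩ := Nat.exists_eq_add_of_lt hik
    rw [add_mul, add_mul, one_mul] at h2
    exfalso; nlinarith [Nat.zero_le (t * (n * n))]

-- lower bound on c
lemma c_lower {n : ℕ} (hn : 2 ≤ n) : n + 1 ≤ ∑ j ∈ range n, (j + 1) := by
  have hsub : ({n - 2, n - 1} : Finset ℕ) ⊆ range n := by
    intro x hx; simp only [mem_insert, mem_singleton] at hx
    rcases hx with rfl | rfl <;> simp [mem_range] <;> omega
  have hle : ((n - 2) + 1) + ((n - 1) + 1) ≤ ∑ j ∈ range n, (j + 1) := by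
    rw [← Finset.sum_pair (show n - 2 ≠ n - 1 by omega) (f := fun j => j + 1)]
    exact Finset.sum_le_sum_of_subset hsub
  omega
open Finset

def gmat (m n : ℕ) (τ : Equiv.Perm (Fin n)) (i : Fin m) (j : Fin n) : ℕ :=
  (i : ℕ) * n + (if (i : ℕ) = 0 then ((τ j : Fin n) : ℕ) else (j : ℕ)) + 1

lemma gmat_inj (m n : ℕ) (τ : Equiv.Perm (Fin n)) :
    Function.Injective (fun p : Fin m × Fin n => gmat m n τ p.1 p.2) := by
  rintro ⟨i, j⟩ ⟨i', j'⟩ h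
  simp only [gmat] at h
  have h' := Nat.add_right_cancel h
  have he : (if (i : ℕ) = 0 then ((τ j : Fin n) : ℕ) else (j : ℕ)) < n := by
    split_ifs <;> exact Fin.is_lt _
  have hf : (if (i' : ℕ) = 0 then ((τ j' : Fin n) : ℕ) else (j' : ℕ)) < n := by
    split_ifs <;> exact Fin.is_lt _
  obtain ⟨h1, h2⟩ := mul_add_lt_inj he hf h'
  have hii : i = i' := Fin.ext h1
  subst hii
  split_ifs at h2 with hc
  · have : τ j = τ j' := Fin.ext h2
    rw [τ.injective this]
  · rw [Fin.ext h2]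

lemma gmat_mem (m n : ℕ) (τ : Equiv.Perm (Fin n)) (i : Fin m) (j : Fin n) :
    gmat m n τ i j ∈ Finset.Icc 1 (m * n) := by
  simp only [Finset.mem_Icc, gmat]
  constructor
  · omega
  · have h1 : (i : ℕ) + 1 ≤ m := i.is_lt
    have h2 : (if (i : ℕ) = 0 then ((τ j : Fin n) : ℕ) else (j : ℕ)) < n := by
      split_ifs <;> exact Fin.is_lt _
    nlinarith

lemma gmat_row (m n : ℕ) (τ : Equiv.Perm (Fin n)) (i : Fin m) :
    ∑ j, gmat m n τ i j = (i : ℕ) * (n * n) + ∑ j ∈ range n, (j + 1) := by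
  have hσ : ∑ j : Fin n, (if (i : ℕ) = 0 then ((τ j : Fin n) : ℕ) else (j : ℕ))
      = ∑ j ∈ range n, j := by
    split_ifs
    · rw [Equiv.sum_comp τ (fun j : Fin n => (j : ℕ))]
      exact Fin.sum_univ_eq_sum_range (fun j => j) n
    · exact Fin.sum_univ_eq_sum_range (fun j => j) n
  have hsplit : ∑ j, gmat m n τ i j
      = (∑ _j : Fin n, ((i : ℕ) * n + 1)) +
        ∑ j : Fin n, (if (i : ℕ) = 0 then ((τ j : Fin n) : ℕ) else (j : ℕ)) := by
    rw [← Finset.sum_add_distrib]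
    apply Finset.sum_congr rfl
    intro j _
    simp only [gmat]; ring
  rw [hsplit, hσ, Finset.sum_const, Finset.card_univ, Fintype.card_fin, smul_eq_mul]
  have h2 : ∑ j ∈ range n, (j + 1) = (∑ j ∈ range n, j) + n := by
    rw [Finset.sum_add_distrib, Finset.sum_const, Finset.card_range, smul_eq_mul, mul_one]
  have h3 : n * ((i : ℕ) * n + 1) = (i : ℕ) * (n * n) + n := by ring
  omega

lemma gmat_col (m n : ℕ) (hm : 1 ≤ m) (τ : Equiv.Perm (Fin n)) (j : Fin n) :
    ∑ i, gmat m n τ i j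
      = (∑ i ∈ range m, (i * n + 1)) + (m - 1) * (j : ℕ) + ((τ j : Fin n) : ℕ) := by
  obtain ⟨m', rfl⟩ : ∃ m', m = m' + 1 := ⟨m - 1, by omega⟩
  rw [Fin.sum_univ_succ]
  have h0 : gmat (m' + 1) n τ 0 j = ((τ j : Fin n) : ℕ) + 1 := by
    simp [gmat]
  have hs : ∀ i : Fin m', gmat (m' + 1) n τ i.succ j = ((i : ℕ) + 1) * n + (j : ℕ) + 1 := by
    intro i
    simp [gmat, Fin.val_succ]
  rw [h0]
  simp only [hs]
  rw [Fin.sum_univ_eq_sum_range (fun i => (i + 1) * n + (j : ℕ) + 1) m']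
  rw [Finset.sum_range_succ' (fun i => i * n + 1) m']
  have hsum : ∑ i ∈ range m', ((i + 1) * n + (j : ℕ) + 1)
      = (∑ i ∈ range m', ((i + 1) * n + 1)) + m' * (j : ℕ) := by
    have : ∀ i, (i + 1) * n + (j : ℕ) + 1 = ((i + 1) * n + 1) + (j : ℕ) := by intro i; ring
    simp only [this]
    rw [Finset.sum_add_distrib, Finset.sum_const, Finset.card_range, smul_eq_mul]
  rw [hsum]
  simp only [Nat.add_sub_cancel]
  omega
lemma build (m n : ℕ) (hm : 1 ≤ m) (hn : 1 ≤ n) (τ : Equiv.Perm (Fin n))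
    (hcols : ∀ j j' : Fin n,
      (∑ i ∈ range m, (i * n + 1)) + (m - 1) * (j : ℕ) + ((τ j : Fin n) : ℕ) =
      (∑ i ∈ range m, (i * n + 1)) + (m - 1) * (j' : ℕ) + ((τ j' : Fin n) : ℕ) → j = j')
    (hcross : ∀ (i : Fin m) (j : Fin n),
      (i : ℕ) * (n * n) + (∑ j ∈ range n, (j + 1)) ≠
      (∑ i ∈ range m, (i * n + 1)) + (m - 1) * (j : ℕ) + ((τ j : Fin n) : ℕ)) :
    ∃ g : Fin m → Fin n → ℕ,
      Function.Injective (fun p : Fin m × Fin n => g p.1 p.2) ∧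
      (∀ i j, g i j ∈ Finset.Icc 1 (m * n)) ∧
      Function.Injective
        (Sum.elim (fun i : Fin m => ∑ j, g i j) (fun j : Fin n => ∑ i, g i j)) := by
  refine ⟨gmat m n τ, gmat_inj m n τ, gmat_mem m n τ, ?_⟩
  have hfun : (Sum.elim (fun i : Fin m => ∑ j, gmat m n τ i j)
        (fun j : Fin n => ∑ i, gmat m n τ i j))
      = Sum.elim (fun i : Fin m => (i : ℕ) * (n * n) + ∑ j ∈ range n, (j + 1))
          (fun j : Fin n =>
            (∑ i ∈ range m, (i * n + 1)) + (m - 1) * (j : ℕ) + ((τ j : Fin n) : ℕ)) := by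
    funext v; cases v
    · simp [gmat_row]
    · simp [gmat_col m n hm τ]
  rw [hfun]
  apply sum_elim_inj
  · intro i i' h
    have h2 := Nat.add_right_cancel h
    exact Fin.ext (Nat.eq_of_mul_eq_mul_right (by positivity) h2)
  · intro j j' h; exact hcols _ _ h
  · intro i j; exact hcross i j
lemma BC {B M x y d e : ℕ} (hd : d < M) (he : e < M)
    (h : B + M * x + d = B + M * y + e) : x = y ∧ d = e := by
  rw [add_assoc, add_assoc] at h
  have h2 := Nat.add_left_cancel h
  rw [mul_comm M x, mul_comm M y] at h2
  exact mul_add_lt_inj hd he h2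

lemma matkey (m n : ℕ) (hm : 1 ≤ m) (hmn : m ≤ n) (hn : 2 ≤ n) :
    ∃ g : Fin m → Fin n → ℕ,
      Function.Injective (fun p : Fin m × Fin n => g p.1 p.2) ∧
      (∀ i j, g i j ∈ Finset.Icc 1 (m * n)) ∧
      Function.Injective
        (Sum.elim (fun i : Fin m => ∑ j, g i j) (fun j : Fin n => ∑ i, g i j)) := by
  obtain ⟨m1, rfl⟩ : ∃ m1, m = m1 + 1 := ⟨m - 1, by omega⟩
  by_cases hcol : ∃ i, i < m1 + 1 ∧ ∃ j, j < n ∧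
      i * (n * n) + (∑ j ∈ range n, (j + 1))
        = (∑ i ∈ range (m1 + 1), (i * n + 1)) + (m1 + 1) * j
  case neg =>
    apply build _ _ (by omega) (by omega) (Equiv.refl (Fin n))
    · intro j j' heq
      simp only [Equiv.refl_apply, Nat.add_sub_cancel] at heq
      rw [add_assoc, add_assoc] at heq
      have h2 := Nat.add_left_cancel heq
      exact Fin.ext (lin_inj h2)
    · intro i j heq
      simp only [Equiv.refl_apply, Nat.add_sub_cancel] at heq
      exact hcol ⟨i, i.is_lt, j, j.is_lt, by rw [heq]; ring⟩
  case pos =>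
  obtain ⟨k, hk, j0, hj0, hkey⟩ := hcol
  have huniq : ∀ i : Fin (m1 + 1), ∀ j : Fin n,
      (i : ℕ) * (n * n) + (∑ j ∈ range n, (j + 1))
        = (∑ i ∈ range (m1 + 1), (i * n + 1)) + (m1 + 1) * (j : ℕ) →
      (i : ℕ) = k ∧ (j : ℕ) = j0 :=
    fun i j h => uniq_col (by omega) hmn hk hj0 i.is_lt j.is_lt hkey h
  have hsq : 2 * n ≤ n * n := Nat.mul_le_mul_right n hn
  have hm1 : 1 ≤ m1 := by
    by_contra h0
    have hz : m1 = 0 := by omega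
    subst hz
    have hkz : k = 0 := by omega
    subst hkz
    rw [Finset.sum_range_one] at hkey
    have hcl := c_lower hn
    simp only [Nat.zero_mul, Nat.zero_add, Nat.one_mul] at hkey
    omega
  by_cases hm2 : 2 ≤ m1
  -- ===================== m ≥ 3 ==========================
  · by_cases hA : j0 + 1 < n
    -- ---- swap j0 (j0+1)
    · set a : Fin n := ⟨j0, hj0⟩ with ha
      set b : Fin n := ⟨j0 + 1, hA⟩ with hb
      have hab : a ≠ b := by simp [ha, hb, Fin.ext_iff]
      set τ := Equiv.swap a b with hτ
      have hτa : ((τ a : Fin n) : ℕ) = j0 + 1 := by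
        rw [hτ, Equiv.swap_apply_left]
      have hτb : ((τ b : Fin n) : ℕ) = j0 := by
        rw [hτ, Equiv.swap_apply_right]
      have hτo : ∀ j : Fin n, (j : ℕ) ≠ j0 → (j : ℕ) ≠ j0 + 1 → τ j = j := by
        intro j h1 h2
        exact Equiv.swap_apply_of_ne_of_ne
          (fun hh => h1 (by rw [hh])) (fun hh => h2 (by rw [hh]))
      have hval : ∀ j : Fin n,
          (∑ i ∈ range (m1 + 1), (i * n + 1)) + m1 * (j : ℕ) + ((τ j : Fin n) : ℕ)
            = (∑ i ∈ range (m1 + 1), (i * n + 1))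
              + (m1 + 1) * (if (j : ℕ) = j0 then j0 else if (j : ℕ) = j0 + 1 then j0 else (j : ℕ))
              + (if (j : ℕ) = j0 then 1 else if (j : ℕ) = j0 + 1 then m1 else 0) := by
        intro j
        by_cases h1 : (j : ℕ) = j0
        · have e1 : ((τ j : Fin n) : ℕ) = j0 + 1 := by
            rw [show j = a from Fin.ext h1]; exact hτa
          rw [if_pos h1, if_pos h1, e1, h1]; ring
        · by_cases h2 : (j : ℕ) = j0 + 1
          · have e1 : ((τ j : Fin n) : ℕ) = j0 := by
              rw [show j = b from Fin.ext h2]; exact hτb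
            rw [if_neg h1, if_neg h1, if_pos h2, if_pos h2, e1, h2]; ring
          · rw [if_neg h1, if_neg h1, if_neg h2, if_neg h2, hτo j h1 h2]
            ring
      apply build _ _ (by omega) (by omega) τ
      · intro j j' heq
        simp only [Nat.add_sub_cancel] at heq
        rw [hval j, hval j'] at heq
        obtain ⟨h1, h2⟩ := BC (by split_ifs <;> omega) (by split_ifs <;> omega) heq
        apply Fin.ext
        split_ifs at h1 h2 <;> omega
      · intro i j heq
        simp only [Nat.add_sub_cancel] at heq
        rw [hval j] at heq
        split_ifs at heq with hc1 hc2
        · rw [← hkey] at heq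
          exact Lneq one_pos (by omega) heq
        · rw [← hkey] at heq
          exact Lneq (by omega) (by omega) heq
        · rw [add_zero] at heq
          exact hc1 (huniq i j heq).2
    -- ---- swap j0 (j0-1),  j0 = n-1
    · obtain ⟨j1, rfl⟩ : ∃ j1, j0 = j1 + 1 := ⟨j0 - 1, by omega⟩
      have hj1 : j1 < n := by omega
      set a : Fin n := ⟨j1 + 1, hj0⟩ with ha
      set b : Fin n := ⟨j1, hj1⟩ with hb
      have hab : a ≠ b := by simp [ha, hb, Fin.ext_iff]
      set τ := Equiv.swap a b with hτ
      have hτa : ((τ a : Fin n) : ℕ) = j1 := by rw [hτ, Equiv.swap_apply_left]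
      have hτb : ((τ b : Fin n) : ℕ) = j1 + 1 := by rw [hτ, Equiv.swap_apply_right]
      have hτo : ∀ j : Fin n, (j : ℕ) ≠ j1 + 1 → (j : ℕ) ≠ j1 → τ j = j := by
        intro j h1 h2
        exact Equiv.swap_apply_of_ne_of_ne
          (fun hh => h1 (by rw [hh])) (fun hh => h2 (by rw [hh]))
      have hval : ∀ j : Fin n,
          (∑ i ∈ range (m1 + 1), (i * n + 1)) + m1 * (j : ℕ) + ((τ j : Fin n) : ℕ)
            = (∑ i ∈ range (m1 + 1), (i * n + 1))
              + (m1 + 1) * (if (j : ℕ) = j1 + 1 then j1 else if (j : ℕ) = j1 then j1 else (j : ℕ))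
              + (if (j : ℕ) = j1 + 1 then m1 else if (j : ℕ) = j1 then 1 else 0) := by
        intro j
        by_cases h1 : (j : ℕ) = j1 + 1
        · have e1 : ((τ j : Fin n) : ℕ) = j1 := by
            rw [show j = a from Fin.ext h1]; exact hτa
          rw [if_pos h1, if_pos h1, e1, h1]; ring
        · by_cases h2 : (j : ℕ) = j1
          · have e1 : ((τ j : Fin n) : ℕ) = j1 + 1 := by
              rw [show j = b from Fin.ext h2]; exact hτb
            rw [if_neg h1, if_neg h1, if_pos h2, if_pos h2, e1, h2]; ring
          · rw [if_neg h1, if_neg h1, if_neg h2, if_neg h2, hτo j h1 h2]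
            ring
      apply build _ _ (by omega) (by omega) τ
      · intro j j' heq
        simp only [Nat.add_sub_cancel] at heq
        rw [hval j, hval j'] at heq
        obtain ⟨h1, h2⟩ := BC (by split_ifs <;> omega) (by split_ifs <;> omega) heq
        apply Fin.ext
        split_ifs at h1 h2 <;> omega
      · intro i j heq
        simp only [Nat.add_sub_cancel] at heq
        rw [hval j] at heq
        have hexp : (∑ i ∈ range (m1 + 1), (i * n + 1)) + (m1 + 1) * (j1 + 1)
            = (∑ i ∈ range (m1 + 1), (i * n + 1)) + (m1 + 1) * j1 + (m1 + 1) := by ring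
        rw [hexp] at hkey
        split_ifs at heq with hc1 hc2
        · -- value = L_k - 1
          have h3 : (k : ℕ) * (n * n) + (∑ j ∈ range n, (j + 1))
              = (i : ℕ) * (n * n) + (∑ j ∈ range n, (j + 1)) + 1 := by linarith
          exact Lneq one_pos (by omega) h3
        · have h3 : (k : ℕ) * (n * n) + (∑ j ∈ range n, (j + 1))
              = (i : ℕ) * (n * n) + (∑ j ∈ range n, (j + 1)) + m1 := by linarith
          exact Lneq (by omega) (by omega) h3
        · rw [add_zero] at heq
          have := (huniq i j heq).2
          omega
  -- ===================== m = 2 ==========================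
  · have hm1e : m1 = 1 := by omega
    subst hm1e
    have hn3 : 3 ≤ n := by
      by_contra hhn
      have hne : n = 2 := by omega
      subst hne
      simp only [Finset.sum_range_succ, Finset.sum_range_zero] at hkey
      omega
    by_cases hA : j0 + 2 < n
    -- forward cycle (j0 j0+1 j0+2)
    · set a : Fin n := ⟨j0, hj0⟩ with ha
      set b : Fin n := ⟨j0 + 1, by omega⟩ with hb
      set cc : Fin n := ⟨j0 + 2, hA⟩ with hcc
      set τ := (Equiv.swap b cc).trans (Equiv.swap a b) with hτ
      have va : ((a : Fin n) : ℕ) = j0 := rfl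
      have vb : ((b : Fin n) : ℕ) = j0 + 1 := rfl
      have vc : ((cc : Fin n) : ℕ) = j0 + 2 := rfl
      have nab : a ≠ b := Fin.ne_of_val_ne (by rw [va, vb]; omega)
      have nac : a ≠ cc := Fin.ne_of_val_ne (by rw [va, vc]; omega)
      have nbc : b ≠ cc := Fin.ne_of_val_ne (by rw [vb, vc]; omega)
      have hτa : ((τ a : Fin n) : ℕ) = j0 + 1 := by
        rw [hτ]
        simp only [Equiv.trans_apply]
        rw [Equiv.swap_apply_of_ne_of_ne nab nac, Equiv.swap_apply_left]
      have hτb : ((τ b : Fin n) : ℕ) = j0 + 2 := by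
        rw [hτ]
        simp only [Equiv.trans_apply]
        rw [Equiv.swap_apply_left,
            Equiv.swap_apply_of_ne_of_ne (Ne.symm nac) (Ne.symm nbc)]
      have hτc : ((τ cc : Fin n) : ℕ) = j0 := by
        rw [hτ]
        simp only [Equiv.trans_apply]
        rw [Equiv.swap_apply_right, Equiv.swap_apply_right]
      have hτo : ∀ j : Fin n, (j : ℕ) ≠ j0 → (j : ℕ) ≠ j0 + 1 → (j : ℕ) ≠ j0 + 2 → τ j = j := by
        intro j h1 h2 h3
        have hja : j ≠ a := Fin.ne_of_val_ne (by rw [va]; exact h1)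
        have hjb : j ≠ b := Fin.ne_of_val_ne (by rw [vb]; exact h2)
        have hjc : j ≠ cc := Fin.ne_of_val_ne (by rw [vc]; exact h3)
        rw [hτ]
        simp only [Equiv.trans_apply]
        rw [Equiv.swap_apply_of_ne_of_ne hjb hjc, Equiv.swap_apply_of_ne_of_ne hja hjb]
      have hval : ∀ j : Fin n,
          (∑ i ∈ range (1 + 1), (i * n + 1)) + 1 * (j : ℕ) + ((τ j : Fin n) : ℕ)
            = (∑ i ∈ range (1 + 1), (i * n + 1))
              + (if (j : ℕ) = j0 then 2 * j0 + 1 else if (j : ℕ) = j0 + 1 then 2 * j0 + 3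
                 else if (j : ℕ) = j0 + 2 then 2 * j0 + 2 else 2 * (j : ℕ)) := by
        intro j
        by_cases h1 : (j : ℕ) = j0
        · have e1 : ((τ j : Fin n) : ℕ) = j0 + 1 := by
            rw [show j = a from Fin.ext h1]; exact hτa
          rw [if_pos h1, e1, h1]; ring
        · by_cases h2 : (j : ℕ) = j0 + 1
          · have e1 : ((τ j : Fin n) : ℕ) = j0 + 2 := by
              rw [show j = b from Fin.ext h2]; exact hτb
            rw [if_neg h1, if_pos h2, e1, h2]; ring
          · by_cases h3 : (j : ℕ) = j0 + 2
            · have e1 : ((τ j : Fin n) : ℕ) = j0 := by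
                rw [show j = cc from Fin.ext h3]; exact hτc
              rw [if_neg h1, if_neg h2, if_pos h3, e1, h3]; ring
            · rw [if_neg h1, if_neg h2, if_neg h3, hτo j h1 h2 h3]
              ring
      apply build _ _ (by omega) (by omega) τ
      · intro j j' heq
        simp only [Nat.add_sub_cancel] at heq
        rw [hval j, hval j'] at heq
        have h2 := Nat.add_left_cancel heq
        apply Fin.ext
        split_ifs at h2 <;> omega
      · intro i j heq
        simp only [Nat.add_sub_cancel] at heq
        rw [hval j] at heq
        split_ifs at heq with hc1 hc2 hc3
        · have h3 : (i : ℕ) * (n * n) + (∑ j ∈ range n, (j + 1))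
              = (k : ℕ) * (n * n) + (∑ j ∈ range n, (j + 1)) + 1 := by linarith
          exact Lneq one_pos (by omega) h3
        · have h3 : (i : ℕ) * (n * n) + (∑ j ∈ range n, (j + 1))
              = (k : ℕ) * (n * n) + (∑ j ∈ range n, (j + 1)) + 3 := by linarith
          exact Lneq (by omega) (by omega) h3
        · have h3 : (i : ℕ) * (n * n) + (∑ j ∈ range n, (j + 1))
              = (k : ℕ) * (n * n) + (∑ j ∈ range n, (j + 1)) + 2 := by linarith
          exact Lneq (by omega) (by omega) h3
        · have heq2 : (i : ℕ) * (n * n) + (∑ j ∈ range n, (j + 1))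
              = (∑ i ∈ range (1 + 1), (i * n + 1)) + (1 + 1) * (j : ℕ) := by linarith
          exact hc1 (huniq i j heq2).2
    · by_cases hB2 : 2 ≤ j0
      -- backward cycle on (j0-2, j0-1, j0)
      · obtain ⟨j2, rfl⟩ : ∃ j2, j0 = j2 + 2 := ⟨j0 - 2, by omega⟩
        set p0 : Fin n := ⟨j2, by omega⟩ with hp0
        set p1 : Fin n := ⟨j2 + 1, by omega⟩ with hp1
        set p2 : Fin n := ⟨j2 + 2, hj0⟩ with hp2
        set τ := (Equiv.swap p2 p1).trans (Equiv.swap p0 p2) with hτ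
        have vp0 : ((p0 : Fin n) : ℕ) = j2 := rfl
        have vp1 : ((p1 : Fin n) : ℕ) = j2 + 1 := rfl
        have vp2 : ((p2 : Fin n) : ℕ) = j2 + 2 := rfl
        have n01 : p0 ≠ p1 := Fin.ne_of_val_ne (by rw [vp0, vp1]; omega)
        have n02 : p0 ≠ p2 := Fin.ne_of_val_ne (by rw [vp0, vp2]; omega)
        have n12 : p1 ≠ p2 := Fin.ne_of_val_ne (by rw [vp1, vp2]; omega)
        have hτ0 : ((τ p0 : Fin n) : ℕ) = j2 + 2 := by
          rw [hτ]
          simp only [Equiv.trans_apply]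
          rw [Equiv.swap_apply_of_ne_of_ne n02 n01, Equiv.swap_apply_left]
        have hτ2 : ((τ p2 : Fin n) : ℕ) = j2 + 1 := by
          rw [hτ]
          simp only [Equiv.trans_apply]
          rw [Equiv.swap_apply_left,
              Equiv.swap_apply_of_ne_of_ne (Ne.symm n01) n12]
        have hτ1 : ((τ p1 : Fin n) : ℕ) = j2 := by
          rw [hτ]
          simp only [Equiv.trans_apply]
          rw [Equiv.swap_apply_right, Equiv.swap_apply_right]
        have hτo : ∀ j : Fin n, (j : ℕ) ≠ j2 → (j : ℕ) ≠ j2 + 1 → (j : ℕ) ≠ j2 + 2 → τ j = j := by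
          intro j h1 h2 h3
          have hj0 : j ≠ p0 := Fin.ne_of_val_ne (by rw [vp0]; exact h1)
          have hj1 : j ≠ p1 := Fin.ne_of_val_ne (by rw [vp1]; exact h2)
          have hj2 : j ≠ p2 := Fin.ne_of_val_ne (by rw [vp2]; exact h3)
          rw [hτ]
          simp only [Equiv.trans_apply]
          rw [Equiv.swap_apply_of_ne_of_ne hj2 hj1, Equiv.swap_apply_of_ne_of_ne hj0 hj2]
        have hval : ∀ j : Fin n,
            (∑ i ∈ range (1 + 1), (i * n + 1)) + 1 * (j : ℕ) + ((τ j : Fin n) : ℕ)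
              = (∑ i ∈ range (1 + 1), (i * n + 1))
                + (if (j : ℕ) = j2 then 2 * j2 + 2 else if (j : ℕ) = j2 + 1 then 2 * j2 + 1
                   else if (j : ℕ) = j2 + 2 then 2 * j2 + 3 else 2 * (j : ℕ)) := by
          intro j
          by_cases h1 : (j : ℕ) = j2
          · have e1 : ((τ j : Fin n) : ℕ) = j2 + 2 := by
              rw [show j = p0 from Fin.ext h1]; exact hτ0
            rw [if_pos h1, e1, h1]; ring
          · by_cases h2 : (j : ℕ) = j2 + 1
            · have e1 : ((τ j : Fin n) : ℕ) = j2 := by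
                rw [show j = p1 from Fin.ext h2]; exact hτ1
              rw [if_neg h1, if_pos h2, e1, h2]; ring
            · by_cases h3 : (j : ℕ) = j2 + 2
              · have e1 : ((τ j : Fin n) : ℕ) = j2 + 1 := by
                  rw [show j = p2 from Fin.ext h3]; exact hτ2
                rw [if_neg h1, if_neg h2, if_pos h3, e1, h3]; ring
              · rw [if_neg h1, if_neg h2, if_neg h3, hτo j h1 h2 h3]
                ring
        apply build _ _ (by omega) (by omega) τ
        · intro j j' heq
          simp only [Nat.add_sub_cancel] at heq
          rw [hval j, hval j'] at heq
          have h2 := Nat.add_left_cancel heq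
          apply Fin.ext
          split_ifs at h2 <;> omega
        · intro i j heq
          simp only [Nat.add_sub_cancel] at heq
          rw [hval j] at heq
          have hexp : (∑ i ∈ range (1 + 1), (i * n + 1)) + (1 + 1) * (j2 + 2)
              = (∑ i ∈ range (1 + 1), (i * n + 1)) + 2 * j2 + 4 := by ring
          rw [hexp] at hkey
          split_ifs at heq with hc1 hc2 hc3
          · have h3 : (k : ℕ) * (n * n) + (∑ j ∈ range n, (j + 1))
                = (i : ℕ) * (n * n) + (∑ j ∈ range n, (j + 1)) + 2 := by linarith
            exact Lneq (by omega) (by omega) h3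
          · have h3 : (k : ℕ) * (n * n) + (∑ j ∈ range n, (j + 1))
                = (i : ℕ) * (n * n) + (∑ j ∈ range n, (j + 1)) + 3 := by linarith
            exact Lneq (by omega) (by omega) h3
          · have h3 : (k : ℕ) * (n * n) + (∑ j ∈ range n, (j + 1))
                = (i : ℕ) * (n * n) + (∑ j ∈ range n, (j + 1)) + 1 := by linarith
            exact Lneq one_pos (by omega) h3
          · have heq2 : (i : ℕ) * (n * n) + (∑ j ∈ range n, (j + 1))
                = (∑ i ∈ range (1 + 1), (i * n + 1)) + (1 + 1) * (j : ℕ) := by linarith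
            have := (huniq i j heq2).2
            omega
      -- impossible corner: n = 3, j0 = 1
      · exfalso
        have hne : n = 3 := by omega
        have hje : j0 = 1 := by omega
        subst hne; subst hje
        simp only [Finset.sum_range_succ, Finset.sum_range_zero] at hkey
        omega
open Classical in
/-- A graph is antimagic if there is a bijection from its edge set to `{1,...,m}`
(`m` the number of edges) such that all vertex sums are pairwise distinct. -/
def SimpleGraph.IsAntimagic {V : Type*} [Fintype V] (G : SimpleGraph V) : Prop :=
  ∃ f : Sym2 V → ℕ,
    Set.BijOn f ↑G.edgeFinset ↑(Finset.Icc 1 G.edgeFinset.card) ∧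
    Function.Injective (fun v : V => ∑ e ∈ G.incidenceFinset v, f e)

lemma wrapper (m n : ℕ) (g : Fin m → Fin n → ℕ)
    (hinj : Function.Injective (fun p : Fin m × Fin n => g p.1 p.2))
    (hmem : ∀ i j, g i j ∈ Finset.Icc 1 (m * n))
    (hsum : Function.Injective
      (Sum.elim (fun i : Fin m => ∑ j, g i j) (fun j : Fin n => ∑ i, g i j))) :
    (completeBipartiteGraph (Fin m) (Fin n)).IsAntimagic := by
  classical
  set G := completeBipartiteGraph (Fin m) (Fin n) with hG
  set F : (Fin m ⊕ Fin n) → (Fin m ⊕ Fin n) → ℕ := fun v w =>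
    match v, w with
    | .inl i, .inr j => g i j
    | .inr j, .inl i => g i j
    | _, _ => 0 with hF
  have hFsymm : ∀ v w, F v w = F w v := by
    intro v w; cases v <;> cases w <;> rfl
  set f : Sym2 (Fin m ⊕ Fin n) → ℕ := Sym2.lift ⟨F, hFsymm⟩ with hf
  have hfval : ∀ (i : Fin m) (j : Fin n), f s(Sum.inl i, Sum.inr j) = g i j := by
    intro i j; rw [hf, Sym2.lift_mk]
  have hedge : ∀ e : Sym2 (Fin m ⊕ Fin n),
      e ∈ G.edgeFinset ↔ ∃ i j, e = s(Sum.inl i, Sum.inr j) := by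
    intro e
    induction e with
    | _ v w =>
      rw [SimpleGraph.mem_edgeFinset, SimpleGraph.mem_edgeSet]
      cases v with
      | inl i =>
        cases w with
        | inl i' =>
          simp only [hG, completeBipartiteGraph_adj]
          constructor
          · rintro (⟨_, h⟩ | ⟨h, _⟩) <;> simp at h
          · rintro ⟨i1, j1, h⟩
            rw [Sym2.eq_iff] at h
            rcases h with ⟨_, h2⟩ | ⟨h1, _⟩ <;> simp_all
        | inr j =>
          simp only [hG, completeBipartiteGraph_adj]
          constructor
          · intro _; exact ⟨i, j, rfl⟩
          · intro _; left; exact ⟨rfl, rfl⟩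
      | inr j =>
        cases w with
        | inl i =>
          simp only [hG, completeBipartiteGraph_adj]
          constructor
          · intro _; exact ⟨i, j, Sym2.eq_swap⟩
          · intro _; right; exact ⟨rfl, rfl⟩
        | inr j' =>
          simp only [hG, completeBipartiteGraph_adj]
          constructor
          · rintro (⟨h, _⟩ | ⟨_, h⟩) <;> simp at h
          · rintro ⟨i1, j1, h⟩
            rw [Sym2.eq_iff] at h
            rcases h with ⟨h1, _⟩ | ⟨_, h2⟩ <;> simp_all
  have emap_inj : Function.Injective
      (fun p : Fin m × Fin n => (s(Sum.inl p.1, Sum.inr p.2) : Sym2 (Fin m ⊕ Fin n))) := by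
    rintro ⟨i, j⟩ ⟨i', j'⟩ h
    simp only [Sym2.eq_iff] at h
    rcases h with ⟨h1, h2⟩ | ⟨h1, h2⟩
    · simp only [Sum.inl.injEq] at h1
      simp only [Sum.inr.injEq] at h2
      simp [Prod.ext_iff, h1, h2]
    · exact absurd h1 (by simp)
  have hedgeset : G.edgeFinset
      = Finset.image (fun p : Fin m × Fin n => s(Sum.inl p.1, Sum.inr p.2)) Finset.univ := by
    ext e
    rw [hedge e, Finset.mem_image]
    constructor
    · rintro ⟨i, j, rfl⟩; exact ⟨(i, j), Finset.mem_univ _, rfl⟩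
    · rintro ⟨⟨i, j⟩, _, rfl⟩; exact ⟨i, j, rfl⟩
  have hcard : G.edgeFinset.card = m * n := by
    rw [hedgeset, Finset.card_image_of_injective _ emap_inj, Finset.card_univ]
    simp
  have hincl : ∀ i : Fin m, G.incidenceFinset (Sum.inl i)
      = Finset.image (fun j : Fin n => s(Sum.inl i, Sum.inr j)) Finset.univ := by
    intro i
    ext e
    rw [SimpleGraph.mem_incidenceFinset, Finset.mem_image]
    constructor
    · rintro ⟨hadj, hmem2⟩
      obtain ⟨i', j', rfl⟩ := (hedge e).mp (SimpleGraph.mem_edgeFinset.mpr hadj)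
      rw [Sym2.mem_iff] at hmem2
      rcases hmem2 with h | h
      · injection h with h'
        subst h'
        exact ⟨j', Finset.mem_univ _, rfl⟩
      · exact absurd h (by simp)
    · rintro ⟨j, _, rfl⟩
      refine ⟨?_, ?_⟩
      · rw [SimpleGraph.mem_edgeSet]
        simp [hG, completeBipartiteGraph_adj]
      · rw [Sym2.mem_iff]; left; rfl
  have hincr : ∀ j : Fin n, G.incidenceFinset (Sum.inr j)
      = Finset.image (fun i : Fin m => s(Sum.inl i, Sum.inr j)) Finset.univ := by
    intro j
    ext e
    rw [SimpleGraph.mem_incidenceFinset, Finset.mem_image]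
    constructor
    · rintro ⟨hadj, hmem2⟩
      obtain ⟨i', j', rfl⟩ := (hedge e).mp (SimpleGraph.mem_edgeFinset.mpr hadj)
      rw [Sym2.mem_iff] at hmem2
      rcases hmem2 with h | h
      · exact absurd h (by simp)
      · injection h with h'
        subst h'
        exact ⟨i', Finset.mem_univ _, rfl⟩
    · rintro ⟨i, _, rfl⟩
      refine ⟨?_, ?_⟩
      · rw [SimpleGraph.mem_edgeSet]
        simp [hG, completeBipartiteGraph_adj]
      · rw [Sym2.mem_iff]; right; rfl
  have hsuml : ∀ i : Fin m, ∑ e ∈ G.incidenceFinset (Sum.inl i), f e = ∑ j, g i j := by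
    intro i
    rw [hincl i, Finset.sum_image]
    · exact Finset.sum_congr rfl fun j _ => hfval i j
    · intro j _ j' _ h
      rw [Sym2.eq_iff] at h
      rcases h with ⟨_, h2⟩ | ⟨h1, _⟩
      · injection h2
      · injection h1
  have hsumr : ∀ j : Fin n, ∑ e ∈ G.incidenceFinset (Sum.inr j), f e = ∑ i, g i j := by
    intro j
    rw [hincr j, Finset.sum_image]
    · exact Finset.sum_congr rfl fun i _ => hfval i j
    · intro i _ i' _ h
      rw [Sym2.eq_iff] at h
      rcases h with ⟨h1, _⟩ | ⟨_, h2⟩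
      · injection h1
      · injection h2
  have hInjOn : Set.InjOn f ↑G.edgeFinset := by
    intro e he e' he' hfe
    rw [Finset.mem_coe] at he he'
    obtain ⟨i, j, rfl⟩ := (hedge e).mp he
    obtain ⟨i', j', rfl⟩ := (hedge e').mp he'
    rw [hfval, hfval] at hfe
    have h2 := hinj (a₁ := (i, j)) (a₂ := (i', j')) hfe
    simp only [Prod.mk.injEq] at h2
    rw [h2.1, h2.2]
  have himg : Finset.image f G.edgeFinset = Finset.Icc 1 G.edgeFinset.card := by
    apply Finset.eq_of_subset_of_card_le
    · intro x hx
      rw [Finset.mem_image] at hx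
      obtain ⟨e, he, rfl⟩ := hx
      obtain ⟨i, j, rfl⟩ := (hedge e).mp he
      rw [hfval, hcard]
      exact hmem i j
    · rw [Finset.card_image_of_injOn hInjOn, Nat.card_Icc]
      omega
  refine ⟨f, ⟨?_, hInjOn, ?_⟩, ?_⟩
  · intro e he
    rw [Finset.mem_coe] at he
    rw [Finset.mem_coe]
    have : f e ∈ Finset.image f G.edgeFinset := Finset.mem_image_of_mem f he
    rw [himg] at this
    exact this
  · intro x hx
    rw [Finset.mem_coe, ← himg, Finset.mem_image] at hx
    obtain ⟨e, he, rfl⟩ := hx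
    exact ⟨e, Finset.mem_coe.mpr he, rfl⟩
  · have hfun : (fun v : Fin m ⊕ Fin n => ∑ e ∈ G.incidenceFinset v, f e)
        = Sum.elim (fun i : Fin m => ∑ j, g i j) (fun j : Fin n => ∑ i, g i j) := by
      funext v
      cases v with
      | inl i => exact hsuml i
      | inr j => exact hsumr j
    exact hfun ▸ hsum

theorem stmt3 (m n : ℕ) (hm : 1 ≤ m) (hn : 1 ≤ n) (hmn : 3 ≤ m + n) :
    (completeBipartiteGraph (Fin m) (Fin n)).IsAntimagic := by
  rcases le_or_gt m n with h | h
  · have hn2 : 2 ≤ n := by omega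
    obtain ⟨g, h1, h2, h3⟩ := matkey m n hm h hn2
    exact wrapper m n g h1 h2 h3
  · have hm2 : 2 ≤ m := by omega
    obtain ⟨g, h1, h2, h3⟩ := matkey n m hn (le_of_lt h) hm2
    apply wrapper m n (fun i j => g j i)
    · rintro ⟨p1, p2⟩ ⟨q1, q2⟩ hpq
      have h4 := h1 (a₁ := (p2, p1)) (a₂ := (q2, q1)) hpq
      simp only [Prod.mk.injEq] at h4 ⊢
      exact ⟨h4.2, h4.1⟩
    · intro i j
      have := h2 j i
      rwa [Nat.mul_comm n m] at this
    · have heq : (Sum.elim (fun i : Fin m => ∑ j, g j i) (fun j : Fin n => ∑ i, g j i))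
          = (Sum.elim (fun j : Fin n => ∑ i, g j i) (fun i : Fin m => ∑ j, g j i))
            ∘ Sum.swap := by
        funext v; cases v <;> rfl
      rw [heq]
      have swap_inj : Function.Injective (@Sum.swap (Fin m) (Fin n)) := by
        intro x y hxy
        rw [← Sum.swap_swap x, ← Sum.swap_swap y, hxy]
      exact Function.Injective.comp h3 swap_inj
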